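/- Let 0 < μ ≤ L, 0 < h < 1/(2L), 0 ≤ ν ≤ μ, q = 1 − νh, m ≥ 1 an integer, and β = Σ_{t=1}^m q^{m−t}. Let D ≥ 0, and let a_0, ..., a_m and b_0, ..., b_{m−1} be reals with a_m ≥ 0, a_0 ≤ (2/μ) D, and a_t + 2h(1 − 2Lh) b_{t−1} ≤ q a_{t−1} + 4(L − μ)h² D for each t = 1, ..., m. Then (1/β) Σ_{t=1}^m q^{m−t} b_{t−1} ≤ c · D, where c = q^m/(β μ h (1 − 2Lh)) + 2(L − μ)h/(1 − 2Lh). -/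

import Mathlib

open scoped BigOperators

/-- single-epoch contraction of S2GD. Under the stated per-step inequalities,
`(1/β) ∑_{t=1}^m q^{m−t} b_{t−1} ≤ c D` where
`c = q^m/(β μ h (1 − 2Lh)) + 2(L − μ)h/(1 − 2Lh)`. -/
theorem s2gd_single_epoch_contraction
    {L μ ν h : ℝ} (hμ : 0 < μ) (hμL : μ ≤ L) (hh0 : 0 < h) (hh : h < 1 / (2 * L))
    (hν0 : 0 ≤ ν) (hνμ : ν ≤ μ)
    {m : ℕ} (hm : 1 ≤ m) {q : ℝ} (hq : q = 1 - ν * h)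
    {β : ℝ} (hβ : β = ∑ t ∈ Finset.Icc 1 m, q ^ (m - t))
    {D : ℝ} (hD : 0 ≤ D) (a b : ℕ → ℝ) (ham : 0 ≤ a m) (ha0 : a 0 ≤ 2 / μ * D)
    (hrec : ∀ t, 1 ≤ t → t ≤ m →
      a t + 2 * h * (1 - 2 * L * h) * b (t - 1) ≤ q * a (t - 1) + 4 * (L - μ) * h ^ 2 * D)
    {c : ℝ}
    (hc : c = q ^ m / (β * μ * h * (1 - 2 * L * h)) + 2 * (L - μ) * h / (1 - 2 * L * h)) :
    (1 / β) * ∑ t ∈ Finset.Icc 1 m, q ^ (m - t) * b (t - 1) ≤ c * D := by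
  have hL : 0 < L := lt_of_lt_of_le hμ hμL
  rw [lt_div_iff₀ (by positivity)] at hh
  have h2Lh : 2 * L * h < 1 := by nlinarith
  have hone : 0 < 1 - 2 * L * h := by linarith
  have hq0 : 0 < q := by
    have h1 : ν * h ≤ μ * h := mul_le_mul_of_nonneg_right hνμ hh0.le
    have h2 : μ * h ≤ L * h := mul_le_mul_of_nonneg_right hμL hh0.le
    rw [hq]; nlinarith
  have hC : 0 < 2 * h * (1 - 2 * L * h) := by positivity
  -- reindex Icc sums to range sums
  have hIcc : ∀ F : ℕ → ℝ, ∑ t ∈ Finset.Icc 1 m, F t = ∑ i ∈ Finset.range m, F (i + 1) := by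
    intro F
    rw [← Finset.Ico_add_one_right_eq_Icc, Finset.sum_Ico_eq_sum_range]
    simp [add_comm]
  have hβ' : β = ∑ i ∈ Finset.range m, q ^ (m - (i + 1)) := by rw [hβ, hIcc]
  have hS : ∑ t ∈ Finset.Icc 1 m, q ^ (m - t) * b (t - 1)
      = ∑ i ∈ Finset.range m, q ^ (m - (i + 1)) * b i := by
    rw [hIcc]; simp
  have hβpos : 0 < β := by
    rw [hβ']
    apply Finset.sum_pos (fun i _ => by positivity)
    exact ⟨0, Finset.mem_range.mpr hm⟩
  -- per-step weighted inequality
  have step : ∀ i ∈ Finset.range m,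
      q ^ (m - (i + 1)) * a (i + 1) + 2 * h * (1 - 2 * L * h) * (q ^ (m - (i + 1)) * b i)
        ≤ q ^ (m - i) * a i + q ^ (m - (i + 1)) * (4 * (L - μ) * h ^ 2 * D) := by
    intro i hi
    rw [Finset.mem_range] at hi
    have hr := hrec (i + 1) (by omega) (by omega)
    simp only [Nat.add_sub_cancel] at hr
    have hw : (0 : ℝ) ≤ q ^ (m - (i + 1)) := by positivity
    have hpow : q ^ (m - (i + 1)) * q = q ^ (m - i) := by
      rw [← pow_succ]; congr 1; omega
    have h1 := mul_le_mul_of_nonneg_left hr hw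
    calc q ^ (m - (i + 1)) * a (i + 1) + 2 * h * (1 - 2 * L * h) * (q ^ (m - (i + 1)) * b i)
        = q ^ (m - (i + 1)) * (a (i + 1) + 2 * h * (1 - 2 * L * h) * b i) := by ring
      _ ≤ q ^ (m - (i + 1)) * (q * a i + 4 * (L - μ) * h ^ 2 * D) := h1
      _ = q ^ (m - (i + 1)) * q * a i + q ^ (m - (i + 1)) * (4 * (L - μ) * h ^ 2 * D) := by ring
      _ = q ^ (m - i) * a i + q ^ (m - (i + 1)) * (4 * (L - μ) * h ^ 2 * D) := by rw [hpow]
  have hsum := Finset.sum_le_sum step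
  rw [Finset.sum_add_distrib, Finset.sum_add_distrib, ← Finset.mul_sum, ← Finset.sum_mul] at hsum
  -- telescoping
  have tele : ∑ i ∈ Finset.range m, (q ^ (m - i) * a i - q ^ (m - (i + 1)) * a (i + 1))
      = q ^ m * a 0 - a m := by
    have := Finset.sum_range_sub' (f := fun i => q ^ (m - i) * a i) m
    simpa using this
  rw [Finset.sum_sub_distrib] at tele
  have hbound : 2 * h * (1 - 2 * L * h) * (∑ i ∈ Finset.range m, q ^ (m - (i + 1)) * b i)
      ≤ q ^ m * (2 / μ * D) + β * (4 * (L - μ) * h ^ 2 * D) := by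
    have ha0' : q ^ m * a 0 ≤ q ^ m * (2 / μ * D) :=
      mul_le_mul_of_nonneg_left ha0 (by positivity)
    rw [hβ']
    linarith
  -- conclude
  rw [hS, one_div, mul_comm, ← div_eq_mul_inv, div_le_iff₀ hβpos]
  rw [← mul_le_mul_iff_of_pos_left hC]
  refine hbound.trans_eq ?_
  rw [hc]
  field_simp
  ring
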